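/- Let G = P ⋊ Q where P is an abelian p-group, Q an abelian q-group, p ≠ q primes. If Ω₁(P) (the subgroup of elements of order dividing p) is a minimal normal subgroup of G, then C_P(a) = 1 for every a ∈ Q \ Z(G). -/

import Mathlib

open scoped Pointwise IsMulCommutative

lemma aux_pow {H : Type*} [Group H] (p : ℕ) (z : H) (hz : z ≠ 1) :
    ∀ k, z ^ p ^ k = 1 → ∃ m, z ^ p ^ m ≠ 1 ∧ (z ^ p ^ m) ^ p = 1
  | 0, h => absurd (by simpa using h) hz
  | (k+1), h => by
      by_cases hk : z ^ p ^ k = 1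
      · exact aux_pow p z hz k hk
      · exact ⟨k, hk, by rw [← pow_mul, ← pow_succ]; exact h⟩

/-- `Ω₁(P)` for an abelian subgroup `P` : the elements of `P` of order dividing `p`. -/
def Omega1 {G : Type*} [Group G] (p : ℕ) (P : Subgroup G) [IsMulCommutative P] :
    Subgroup G where
  carrier := {x | x ∈ P ∧ x ^ p = 1}
  one_mem' := ⟨P.one_mem, one_pow p⟩
  mul_mem' := fun {a b} ha hb => ⟨P.mul_mem ha.1 hb.1, by
    have h : Commute a b := Subgroup.mul_comm_of_mem_isMulCommutative (H := P) ha.1 hb.1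
    rw [h.mul_pow, ha.2, hb.2, one_mul]⟩
  inv_mem' := fun {a} ha => ⟨P.inv_mem ha.1, by rw [inv_pow, ha.2, inv_one]⟩

/-- If `G = P ⋊ Q` with `P` an abelian `p`-group, `Q` an abelian `q`-group, `p ≠ q`,
and `Ω₁(P)` is a minimal normal subgroup of `G`, then `C_P(a) = 1` for every
`a ∈ Q \ Z(G)`. -/
theorem stmt14 {G : Type*} [Group G] [Finite G] (p q : ℕ)
    (hp : p.Prime) (hq : q.Prime) (hpq : p ≠ q)
    (P Q : Subgroup G) [IsMulCommutative P] (hQc : IsMulCommutative Q)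
    (hPp : IsPGroup p ↥P) (hQq : IsPGroup q ↥Q) (hPn : P.Normal)
    (h1 : P ⊓ Q = ⊥) (h2 : P ⊔ Q = ⊤)
    (hW1 : (Omega1 p P).Normal) (hW2 : Omega1 p P ≠ ⊥)
    (hWmin : ∀ N : Subgroup G, N.Normal → N < Omega1 p P → N = ⊥) :
    ∀ a ∈ Q, a ∉ Subgroup.center G → ∀ x ∈ P, a * x = x * a → x = 1 := by
  haveI := hPn
  haveI := hQc
  intro a haQ haZ x hxP hax
  by_contra hx1
  -- decomposition G = P * Q
  have hdecomp : ∀ g : G, ∃ y ∈ P, ∃ b ∈ Q, g = y * b := by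
    intro g
    have hg : g ∈ (P : Set G) * (Q : Set G) := by
      rw [← Subgroup.normal_mul P Q, h2]; trivial
    obtain ⟨y, hy, b, hb, rfl⟩ := hg
    exact ⟨y, hy, b, hb, rfl⟩
  have hPcomm : ∀ {y z : G}, y ∈ P → z ∈ P → Commute y z := fun hy hz =>
    Subgroup.mul_comm_of_mem_isMulCommutative (H := P) hy hz
  have hQcomm : ∀ {b : G}, b ∈ Q → Commute a b := fun hb =>
    Subgroup.mul_comm_of_mem_isMulCommutative (H := Q) haQ hb
  set C : Subgroup G := Subgroup.centralizer {a} ⊓ P with hCdef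
  have hmemC : ∀ {z : G}, z ∈ P → Commute a z → z ∈ C := by
    intro z hz hc
    exact Subgroup.mem_inf.mpr ⟨Subgroup.mem_centralizer_iff.mpr
      (by rintro h rfl; exact hc), hz⟩
  -- C is normal in G
  have hCn : C.Normal := by
    constructor
    intro c hc g
    obtain ⟨hca, hcP⟩ := Subgroup.mem_inf.mp hc
    have hac : Commute a c := Subgroup.mem_centralizer_iff.mp hca a rfl
    obtain ⟨y, hy, b, hb, rfl⟩ := hdecomp g
    have hbc : b * c * b⁻¹ ∈ P := hPn.conj_mem c hcP b
    have key : (y * b) * c * (y * b)⁻¹ = b * c * b⁻¹ := by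
      have hyc : Commute y (b * c * b⁻¹) := hPcomm hy hbc
      rw [mul_inv_rev]
      calc y * b * c * (b⁻¹ * y⁻¹) = y * (b * c * b⁻¹) * y⁻¹ := by group
        _ = (b * c * b⁻¹) * y * y⁻¹ := by rw [hyc.eq]
        _ = b * c * b⁻¹ := by group
    rw [key]
    have hab : Commute a b := hQcomm hb
    exact hmemC hbc ((hab.mul_right hac).mul_right hab.inv_right)
  -- order of x is a p-power; get an element of order p in C
  obtain ⟨kx, hkx⟩ := hPp ⟨x, hxP⟩
  have hkxG : x ^ p ^ kx = 1 := by
    have := congrArg (Subtype.val) hkx; push_cast at this; exact this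
  obtain ⟨m, hw1, hwp⟩ := aux_pow p x hx1 kx hkxG
  set w : G := x ^ p ^ m with hwdef
  have hwP : w ∈ P := P.pow_mem hxP _
  have hax' : Commute a x := hax
  have haw : Commute a w := hax'.pow_right _
  have hwW : w ∈ Omega1 p P := ⟨hwP, hwp⟩
  have hwC : w ∈ C := hmemC hwP haw
  -- Ω₁(P) ≤ C by minimality
  have hWC : Omega1 p P ≤ C := by
    by_contra hle
    have hn : (Omega1 p P ⊓ C).Normal := by
      constructor
      intro z hz g
      obtain ⟨hz1, hz2⟩ := Subgroup.mem_inf.mp hz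
      exact Subgroup.mem_inf.mpr ⟨hW1.conj_mem z hz1 g, hCn.conj_mem z hz2 g⟩
    have hlt : Omega1 p P ⊓ C < Omega1 p P :=
      lt_of_le_of_ne inf_le_left (fun h => hle (inf_eq_left.mp h))
    have hbot := hWmin _ hn hlt
    have : w ∈ (⊥ : Subgroup G) := hbot ▸ Subgroup.mem_inf.mpr ⟨hwW, hwC⟩
    exact hw1 (Subgroup.mem_bot.mp this)
  have hWcent : ∀ {z : G}, z ∈ P → z ^ p = 1 → Commute a z := by
    intro z hz hzp
    have := Subgroup.mem_inf.mp (hWC ⟨hz, hzp⟩)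
    exact Subgroup.mem_centralizer_iff.mp this.1 a rfl
  -- coprimality: orderOf a is a q-power, coprime to p
  set n := orderOf a with hndef
  obtain ⟨kq, hkq⟩ := hQq ⟨a, haQ⟩
  have hanq : a ^ q ^ kq = 1 := by
    have := congrArg (Subtype.val) hkq; push_cast at this; exact this
  have hcop : Nat.Coprime p n :=
    Nat.Coprime.coprime_dvd_right (orderOf_dvd_of_pow_eq_one hanq)
      (((Nat.coprime_primes hp hq).mpr hpq).pow_right kq)
  -- the norm map on P
  let cj : ℕ → ↥P → ↥P := fun i y => ⟨a ^ i * ↑y * (a ^ i)⁻¹, hPn.conj_mem _ y.2 _⟩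
  let gm : ↥P → ↥P := fun y => ∏ i ∈ Finset.range n, cj i y
  have cj_mul : ∀ i (y z : ↥P), cj i (y * z) = cj i y * cj i z := by
    intro i y z; apply Subtype.ext; push_cast [cj]; group
  have gm_mul : ∀ y z : ↥P, gm (y * z) = gm y * gm z := by
    intro y z
    simp only [gm]
    rw [← Finset.prod_mul_distrib]
    exact Finset.prod_congr rfl fun i _ => cj_mul i y z
  have gm_one : gm 1 = 1 := by
    simp only [gm]
    apply Finset.prod_eq_one
    intro i _
    apply Subtype.ext; push_cast [cj]; group
  have gm_pow : ∀ (y : ↥P) (t : ℕ), gm (y ^ t) = gm y ^ t := by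
    intro y t
    induction t with
    | zero => simpa using gm_one
    | succ s ih => rw [pow_succ, gm_mul, ih, pow_succ]
  have gm_fix : ∀ y : ↥P, Commute a ↑y → gm y = y ^ n := by
    intro y hc
    have : ∀ i, cj i y = y := by
      intro i
      apply Subtype.ext
      have : Commute (a ^ i) (y : G) := hc.pow_left i
      show a ^ i * ↑y * (a ^ i)⁻¹ = ↑y
      rw [this.eq]; group
    simp only [gm]
    rw [Finset.prod_congr rfl fun i _ => this i, Finset.prod_const,
      Finset.card_range]
  -- kernel of gm is trivial
  have hker : ∀ z : ↥P, gm z = 1 → z = 1 := by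
    intro z hz
    by_contra hz1
    obtain ⟨kz, hkz⟩ := hPp z
    obtain ⟨mz, hv1, hvp⟩ := aux_pow p z hz1 kz hkz
    set v : ↥P := z ^ p ^ mz with hvdef
    have hvpG : (v : G) ^ p = 1 := by
      have := congrArg (Subtype.val) hvp; push_cast at this; exact this
    have hcv : Commute a (v : G) := hWcent v.2 hvpG
    have h1' : gm v = v ^ n := gm_fix v hcv
    have h2' : gm v = 1 := by rw [hvdef, gm_pow, hz, one_pow]
    have hvn : v ^ n = 1 := by rw [← h1', h2']
    have hvp' : v ^ p = 1 := Subtype.ext (by push_cast; exact hvpG)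
    have hd1 : orderOf v ∣ p := orderOf_dvd_of_pow_eq_one hvp'
    have hd2 : orderOf v ∣ n := orderOf_dvd_of_pow_eq_one hvn
    have : orderOf v ∣ Nat.gcd p n := Nat.dvd_gcd hd1 hd2
    rw [hcop] at this
    exact hv1 (orderOf_eq_one_iff.mp (Nat.dvd_one.mp this))
  -- shift invariance : gm (a y a⁻¹) = gm y
  have gm_shift : ∀ (y : ↥P) (hy : a * ↑y * a⁻¹ ∈ P),
      gm ⟨a * ↑y * a⁻¹, hy⟩ = gm y := by
    intro y hy
    have hstep : ∀ i, cj i ⟨a * ↑y * a⁻¹, hy⟩ = cj (i + 1) y := by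
      intro i
      apply Subtype.ext
      show a ^ i * (a * ↑y * a⁻¹) * (a ^ i)⁻¹ = a ^ (i+1) * ↑y * (a ^ (i+1))⁻¹
      rw [pow_succ]
      group
    have hends : cj n y = cj 0 y := by
      apply Subtype.ext
      show a ^ n * ↑y * (a ^ n)⁻¹ = a ^ 0 * ↑y * (a ^ 0)⁻¹
      rw [hndef, pow_orderOf_eq_one, pow_zero]
    simp only [gm]
    rw [Finset.prod_congr rfl fun i _ => hstep i]
    have e1 : ∏ i ∈ Finset.range (n+1), cj i y
        = (∏ i ∈ Finset.range n, cj (i+1) y) * cj 0 y :=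
      Finset.prod_range_succ' (fun i => cj i y) n
    have e2 : ∏ i ∈ Finset.range (n+1), cj i y
        = (∏ i ∈ Finset.range n, cj i y) * cj n y :=
      Finset.prod_range_succ (fun i => cj i y) n
    have := e1.symm.trans e2
    rw [hends] at this
    exact mul_right_cancel this
  -- a centralizes P
  have hacent : ∀ y ∈ P, Commute a y := by
    intro y hy
    set Y : ↥P := ⟨y, hy⟩ with hYdef
    have hsY : a * y * a⁻¹ ∈ P := hPn.conj_mem y hy a
    set σY : ↥P := ⟨a * y * a⁻¹, hsY⟩ with hsYdef
    have hinv : gm Y⁻¹ = (gm Y)⁻¹ := by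
      have : gm (Y * Y⁻¹) = gm Y * gm Y⁻¹ := gm_mul Y Y⁻¹
      rw [mul_inv_cancel, gm_one] at this
      exact (eq_inv_of_mul_eq_one_right this.symm)
    have : gm (σY * Y⁻¹) = 1 := by
      rw [gm_mul, hinv, gm_shift Y hsY, mul_inv_cancel]
    have h0 := hker _ this
    have : σY = Y := by
      have := mul_eq_one_iff_eq_inv.mp h0
      rw [this]; simp
    have hval : a * y * a⁻¹ = y := congrArg Subtype.val this
    have : a * y = y * a := by
      calc a * y = a * y * a⁻¹ * a := by group
        _ = y * a := by rw [hval]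
    exact this
  -- a is central : contradiction
  apply absurd ?_ haZ
  apply Subgroup.mem_center_iff.mpr
  intro g
  obtain ⟨y, hy, b, hb, rfl⟩ := hdecomp g
  have h1' : Commute a y := hacent y hy
  have h2' : Commute a b := hQcomm hb
  calc y * b * a = y * (a * b) := by rw [mul_assoc, ← h2'.eq]
    _ = a * (y * b) := by rw [← mul_assoc, ← h1'.eq, mul_assoc]
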